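/- Let K ⊂ ℝⁿ be compact and path-connected such that any two points x₀, y₀ ∈ K are joined by a Lipschitz path γ : [0,1] → K with total variation at most Λ ‖x₀ − y₀‖ for a fixed constant Λ > 0. Suppose the flow φ satisfies local contraction: there exist δ > 0, ν > 0, C > 0 such that whenever x₀, y₀ ∈ K with ‖x₀ − y₀‖ < δ, then ‖φ(t,x₀) − φ(t,y₀)‖ ≤ C e^{-ν t} ‖x₀ − y₀‖ for all t ≥ 0. Then for all x₀, y₀ ∈ K and all t ≥ 0, ‖φ(t,x₀) − φ(t,y₀)‖ ≤ C Λ e^{-ν t} ‖x₀ − y₀‖. -/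

import Mathlib

open Set

/-- Local-to-global contraction: local exponential contraction together with
uniformly short Lipschitz paths in `K` yields global exponential contraction
with constant `C Λ`. -/
theorem stmt_5 (n : ℕ) (K : Set (EuclideanSpace ℝ (Fin n)))
    (hK : IsCompact K) (hKpc : IsPathConnected K)
    (Λ : ℝ) (hΛ : 0 < Λ)
    (hpath : ∀ x₀ ∈ K, ∀ y₀ ∈ K, ∃ γ : ℝ → EuclideanSpace ℝ (Fin n),
      γ 0 = x₀ ∧ γ 1 = y₀ ∧ Set.MapsTo γ (Set.Icc 0 1) K ∧
      (∃ L : NNReal, LipschitzOnWith L γ (Set.Icc 0 1)) ∧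
      eVariationOn γ (Set.Icc 0 1) ≤ ENNReal.ofReal (Λ * ‖x₀ - y₀‖))
    (φ : ℝ → EuclideanSpace ℝ (Fin n) → EuclideanSpace ℝ (Fin n))
    (hinv : ∀ t, 0 ≤ t → Set.MapsTo (φ t) K K)
    (δ C ν : ℝ) (hδ : 0 < δ) (hC : 0 < C) (hν : 0 < ν)
    (hlocal : ∀ x₀ ∈ K, ∀ y₀ ∈ K, ‖x₀ - y₀‖ < δ → ∀ t, 0 ≤ t →
      ‖φ t x₀ - φ t y₀‖ ≤ C * Real.exp (-ν * t) * ‖x₀ - y₀‖) :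
    ∀ x₀ ∈ K, ∀ y₀ ∈ K, ∀ t, 0 ≤ t →
      ‖φ t x₀ - φ t y₀‖ ≤ C * Λ * Real.exp (-ν * t) * ‖x₀ - y₀‖ := by
  intro x₀ hx₀ y₀ hy₀ t ht
  obtain ⟨γ, hγ0, hγ1, hγK, ⟨L, hL⟩, hvar⟩ := hpath x₀ hx₀ y₀ hy₀
  -- choose the number of subdivision points
  set N : ℕ := ⌈(L : ℝ) / δ⌉₊ + 1 with hN
  have hN0 : 0 < N := Nat.succ_pos _
  have hNR : (0:ℝ) < N := Nat.cast_pos.mpr hN0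
  have hLN : (L : ℝ) < δ * N := by
    have h1 : (L : ℝ) / δ < N := by
      calc (L : ℝ) / δ ≤ ⌈(L : ℝ) / δ⌉₊ := Nat.le_ceil _
        _ < N := by exact_mod_cast Nat.lt_succ_self _
    calc (L : ℝ) = ((L : ℝ) / δ) * δ := by field_simp
      _ < N * δ := mul_lt_mul_of_pos_right h1 hδ
      _ = δ * N := mul_comm _ _
  -- partition points
  set u : ℕ → ℝ := fun i => (min i N : ℕ) / N with hu
  have humem : ∀ i, u i ∈ Set.Icc (0:ℝ) 1 := by
    intro i
    constructor
    · positivity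
    · rw [div_le_one hNR]
      exact_mod_cast min_le_right i N
  have humono : Monotone u := by
    intro i j hij
    have h : ((min i N : ℕ) : ℝ) ≤ ((min j N : ℕ) : ℝ) := by
      exact_mod_cast min_le_min hij le_rfl
    simp only [hu]
    gcongr
  have hmemK : ∀ i, γ (u i) ∈ K := fun i => hγK (humem i)
  -- consecutive points are close
  have hstep : ∀ i, dist (γ (u (i + 1))) (γ (u i)) < δ := by
    intro i
    have h1 : dist (u (i + 1)) (u i) ≤ 1 / N := by
      have hmm : (min (i+1) N : ℕ) ≤ min i N + 1 := by omega
      have hmm2 : (min i N : ℕ) ≤ min (i+1) N := by omega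
      have hc : ((min (i+1) N : ℕ) : ℝ) ≤ ((min i N : ℕ) : ℝ) + 1 := by exact_mod_cast hmm
      have hc2 : ((min i N : ℕ) : ℝ) ≤ ((min (i+1) N : ℕ) : ℝ) := by exact_mod_cast hmm2
      have hzz : u (i+1) - u i = (((min (i+1) N : ℕ):ℝ) - ((min i N : ℕ):ℝ)) / N := by
        simp [hu, sub_div]
      rw [Real.dist_eq, abs_of_nonneg (by rw [hzz]; apply div_nonneg (by linarith) hNR.le)]
      rw [hzz]
      gcongr
      linarith
    calc dist (γ (u (i+1))) (γ (u i)) ≤ L * dist (u (i+1)) (u i) :=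
          hL.dist_le_mul _ (humem _) _ (humem _)
      _ ≤ L * (1 / N) := by
          exact mul_le_mul_of_nonneg_left h1 (by positivity)
      _ < δ := by rw [mul_one_div, div_lt_iff₀ hNR]; linarith
  -- sum of consecutive distances is at most the variation
  have hsum : ∑ i ∈ Finset.range N, dist (γ (u (i + 1))) (γ (u i)) ≤ Λ * ‖x₀ - y₀‖ := by
    have h1 : ∑ i ∈ Finset.range N, edist (γ (u (i + 1))) (γ (u i)) ≤
        ENNReal.ofReal (Λ * ‖x₀ - y₀‖) :=
      le_trans (eVariationOn.sum_le (f := γ) (n := N) humono humem) hvar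
    have h2 : ENNReal.ofReal (∑ i ∈ Finset.range N, dist (γ (u (i + 1))) (γ (u i))) ≤
        ENNReal.ofReal (Λ * ‖x₀ - y₀‖) := by
      rw [ENNReal.ofReal_sum_of_nonneg (fun i _ => dist_nonneg)]
      simpa only [edist_dist] using h1
    exact (ENNReal.ofReal_le_ofReal_iff (by positivity)).mp h2
  -- endpoints
  have hu0 : γ (u 0) = x₀ := by
    have : u 0 = 0 := by simp [hu]
    rw [this, hγ0]
  have huN : γ (u N) = y₀ := by
    have : u N = 1 := by simp [hu]
    rw [this, hγ1]
  -- telescoping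
  have htel : dist (φ t x₀) (φ t y₀) ≤
      ∑ i ∈ Finset.range N, dist (φ t (γ (u i))) (φ t (γ (u (i + 1)))) := by
    have := dist_le_range_sum_dist (fun i => φ t (γ (u i))) N
    simpa [hu0, huN] using this
  have hterm : ∀ i, dist (φ t (γ (u i))) (φ t (γ (u (i + 1)))) ≤
      C * Real.exp (-ν * t) * dist (γ (u (i + 1))) (γ (u i)) := by
    intro i
    have := hlocal (γ (u i)) (hmemK i) (γ (u (i+1))) (hmemK (i+1))
      (by rw [← dist_eq_norm, dist_comm]; exact hstep i) t ht
    rw [dist_eq_norm, dist_comm (γ (u (i+1)))]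
    rwa [dist_eq_norm]
  calc ‖φ t x₀ - φ t y₀‖ = dist (φ t x₀) (φ t y₀) := (dist_eq_norm _ _).symm
    _ ≤ ∑ i ∈ Finset.range N, dist (φ t (γ (u i))) (φ t (γ (u (i + 1)))) := htel
    _ ≤ ∑ i ∈ Finset.range N, C * Real.exp (-ν * t) * dist (γ (u (i + 1))) (γ (u i)) :=
        Finset.sum_le_sum fun i _ => hterm i
    _ = C * Real.exp (-ν * t) * ∑ i ∈ Finset.range N, dist (γ (u (i + 1))) (γ (u i)) := by
        rw [← Finset.mul_sum]
    _ ≤ C * Real.exp (-ν * t) * (Λ * ‖x₀ - y₀‖) := by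
        apply mul_le_mul_of_nonneg_left hsum (by positivity)
    _ = C * Λ * Real.exp (-ν * t) * ‖x₀ - y₀‖ := by ring
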